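/- Let G be a finite connected chordal graph, let x be a vertex of G, and let u, v be vertices with d_G(u,x) = d_G(v,x) = ℓ for some positive integer ℓ. Suppose d_G(u,v) = p for some odd integer p ≥ 3, and let K_u (respectively K_v) be the set of ancestors of u (respectively v) in the level N^{ℓ−⌊p/2⌋}(x). Then K_u and K_v are adjacent cliques of G, i.e. they are disjoint and some vertex of K_u is adjacent in G to some vertex of K_v. -/

import Mathlib

open SimpleGraph

/-- A simple graph is *chordal* if every cycle of length at least 4 has a chord, i.e.
two vertices of the cycle that are adjacent in the graph but not consecutive on the cycle. -/
def SimpleGraph.IsChordal {V : Type*} (G : SimpleGraph V) : Prop :=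
  ∀ (v : V) (c : G.Walk v v), c.IsCycle → 4 ≤ c.length →
    ∃ x y, x ∈ c.support ∧ y ∈ c.support ∧ G.Adj x y ∧ ¬ c.toSubgraph.Adj x y

/-- The exact distance-`p` graph of `G`: same vertex set, with an edge between distinct
vertices `u` and `v` iff their graph distance is exactly `p`. -/
def SimpleGraph.exactDistGraph {V : Type*} (G : SimpleGraph V) (p : ℕ) : SimpleGraph V where
  Adj u v := u ≠ v ∧ G.edist u v = p
  symm := ⟨fun u v h => ⟨h.1.symm, by rw [SimpleGraph.edist_comm]; exact h.2⟩⟩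
  loopless := ⟨fun v h => h.1 rfl⟩

/-- `w` is an *ancestor* of `u` with respect to `x` if `w` lies on a strictly earlier
distance-level from `x` than `u` does, and there is a path from `u` to `w` whose length is
the difference of the two levels. -/
def SimpleGraph.IsAncestor {V : Type*} (G : SimpleGraph V) (x w u : V) : Prop :=
  G.dist x w < G.dist x u ∧
    ∃ q : G.Walk u w, q.IsPath ∧ q.length = G.dist x u - G.dist x w

namespace ChordalAux
variable {V : Type*} {G : SimpleGraph V}




lemma adj_dist_le (hc : G.Connected) (x : V) {a b : V} (h : G.Adj a b) :
    G.dist x a ≤ G.dist x b + 1 := by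
  have h1 : G.dist x a ≤ G.dist x b + G.dist b a := hc.dist_triangle
  have h2 : G.dist b a ≤ 1 := by simpa using G.dist_le h.symm.toWalk
  omega

lemma exists_parent (hc : G.Connected) (x : V) {u : V} (h1 : 1 ≤ G.dist x u) :
    ∃ w, G.Adj u w ∧ G.dist x w + 1 = G.dist x u := by
  obtain ⟨p, hp⟩ := hc.exists_walk_length_eq_dist u x
  cases p with
  | nil =>
    have hx : G.dist x x = 0 := SimpleGraph.dist_self
    omega
  | @cons _ c _ hadj q =>
    refine ⟨c, hadj, ?_⟩
    have h2 : G.dist x c ≤ q.length := by rw [SimpleGraph.dist_comm]; exact G.dist_le q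
    have h3 : G.dist x u ≤ G.dist x c + 1 := adj_dist_le hc x hadj
    have h4 : G.dist u x = G.dist x u := SimpleGraph.dist_comm
    simp only [Walk.length_cons] at hp
    omega

lemma desc_le (hc : G.Connected) (x : V) {a b : V} (W : G.Walk a b) :
    W.length + G.dist x b = G.dist x a →
    ∀ w ∈ W.support, G.dist x w ≤ G.dist x a ∧ (w = b ∨ G.dist x b < G.dist x w) := by
  induction W with
  | nil =>
    intro _ w hw
    simp only [Walk.support_nil, List.mem_singleton] at hw
    subst hw
    exact ⟨le_rfl, Or.inl rfl⟩
  | @cons a c b h q ih =>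
    intro hW w hw
    have hca : G.dist x a ≤ G.dist x c + 1 := adj_dist_le hc x h
    have hcb : G.dist x c ≤ G.dist x b + q.length := by
      have t1 : G.dist x c ≤ G.dist x b + G.dist b c := hc.dist_triangle
      have t2 : G.dist b c ≤ q.length := by rw [SimpleGraph.dist_comm]; exact G.dist_le q
      omega
    simp only [Walk.length_cons] at hW
    have hq : q.length + G.dist x b = G.dist x c := by omega
    rw [Walk.support_cons, List.mem_cons] at hw
    rcases hw with rfl | hw
    · exact ⟨le_rfl, Or.inr (by omega)⟩
    · obtain ⟨h1, h2⟩ := ih hq w hw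
      exact ⟨by omega, h2⟩

lemma desc_isPath (hc : G.Connected) (x : V) {a b : V} (W : G.Walk a b) :
    W.length + G.dist x b = G.dist x a → W.IsPath := by
  induction W with
  | nil => intro _; exact Walk.IsPath.nil
  | @cons a c b h q ih =>
    intro hW
    have hca : G.dist x a ≤ G.dist x c + 1 := adj_dist_le hc x h
    have hcb : G.dist x c ≤ G.dist x b + q.length := by
      have t1 : G.dist x c ≤ G.dist x b + G.dist b c := hc.dist_triangle
      have t2 : G.dist b c ≤ q.length := by rw [SimpleGraph.dist_comm]; exact G.dist_le q
      omega
    simp only [Walk.length_cons] at hW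
    have hq : q.length + G.dist x b = G.dist x c := by omega
    refine (ih hq).cons ?_
    intro hmem
    have := (desc_le hc x q hq a hmem).1
    omega

lemma exists_desc (hc : G.Connected) (x : V) :
    ∀ (k : ℕ) (u : V), k ≤ G.dist x u → ∃ (a : V) (W : G.Walk u a),
      W.length = k ∧ G.dist x a + k = G.dist x u := by
  intro k
  induction k with
  | zero => exact fun u _ => ⟨u, Walk.nil, rfl, by simp⟩
  | succ k ih =>
    intro u hk
    obtain ⟨w, hadj, hw⟩ := exists_parent hc x (u := u) (by omega)
    obtain ⟨a, W, h1, h2⟩ := ih w (by omega)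
    exact ⟨a, Walk.cons hadj W, by simp [h1], by omega⟩

lemma shortest_support (hc : G.Connected) {u v : V} (W : G.Walk u v) :
    W.length = G.dist u v →
    ∀ w ∈ W.support, G.dist u w + G.dist w v = G.dist u v := by
  induction W with
  | nil =>
    intro _ w hw
    simp only [Walk.support_nil, List.mem_singleton] at hw
    subst hw
    simp
  | @cons u c v h q ih =>
    intro hW w hw
    have hadj1 : G.dist u c ≤ 1 := by simpa using G.dist_le h.toWalk
    have h1 : G.dist u v ≤ G.dist u c + G.dist c v := hc.dist_triangle
    have h2 : G.dist c v ≤ q.length := G.dist_le q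
    simp only [Walk.length_cons] at hW
    have hq : q.length = G.dist c v := by omega
    rw [Walk.support_cons, List.mem_cons] at hw
    rcases hw with rfl | hw
    · simp
    · have h3 := ih hq w hw
      have h4 : G.dist u w ≤ G.dist u c + G.dist c w := hc.dist_triangle
      have h5 : G.dist u v ≤ G.dist u w + G.dist w v := hc.dist_triangle
      omega





lemma edge_of_length_one {c d : V} (R : G.Walk c d) (h : R.length = 1) :
    s(c, d) ∈ R.edges := by
  cases R with
  | nil => simp at h
  | @cons _ e _ hr r =>
    simp only [Walk.length_cons, add_eq_right] at h
    have he : e = d := Walk.eq_of_length_eq_zero h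
    subst he
    simp

lemma splice [DecidableEq V] {a b w1 w2 : V} (P : G.Walk a b) (h1 : w1 ∈ P.support) (h2 : w2 ∈ P.support)
    (hne : w1 ≠ w2) (hadj : G.Adj w1 w2) (hE : s(w1, w2) ∉ P.edges) :
    ∃ Q : G.Walk a b, Q.length < P.length ∧ ∀ w ∈ Q.support, w ∈ P.support := by
  have hsplit : P.length = (P.takeUntil w2 h2).length + (P.dropUntil w2 h2).length := by
    have := congrArg Walk.length (P.take_spec h2)
    rw [Walk.length_append] at this
    omega
  by_cases hmem : w1 ∈ (P.takeUntil w2 h2).support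
  · set T := P.takeUntil w2 h2 with hT
    set D := P.dropUntil w2 h2 with hD
    have hsplit2 : T.length = (T.takeUntil w1 hmem).length + (T.dropUntil w1 hmem).length := by
      have := congrArg Walk.length (T.take_spec hmem)
      rw [Walk.length_append] at this
      omega
    have hR2 : 2 ≤ (T.dropUntil w1 hmem).length := by
      rcases Nat.lt_or_ge (T.dropUntil w1 hmem).length 2 with hlt | hge
      · by_cases hz0 : (T.dropUntil w1 hmem).length = 0
        · exact absurd (Walk.eq_of_length_eq_zero hz0) hne
        · have hz1 : (T.dropUntil w1 hmem).length = 1 := by omega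
          exact absurd (P.edges_takeUntil_subset h2
            ((T.edges_dropUntil_subset hmem) (edge_of_length_one _ hz1))) hE
      · exact hge
    refine ⟨(T.takeUntil w1 hmem).append (Walk.cons hadj D), ?_, ?_⟩
    · rw [Walk.length_append, Walk.length_cons]
      omega
    · intro w hw
      rw [Walk.mem_support_append_iff] at hw
      rcases hw with hw | hw
      · exact P.support_takeUntil_subset h2 (T.support_takeUntil_subset hmem hw)
      · rw [Walk.support_cons, List.mem_cons] at hw
        rcases hw with rfl | hw
        · exact h1
        · exact P.support_dropUntil_subset h2 hw
  · have hmem' : w1 ∈ (P.dropUntil w2 h2).support := by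
      have h1' : w1 ∈ ((P.takeUntil w2 h2).append (P.dropUntil w2 h2)).support := by
        rw [P.take_spec h2]; exact h1
      rw [Walk.mem_support_append_iff] at h1'
      exact h1'.resolve_left hmem
    set T := P.takeUntil w2 h2 with hT
    set D := P.dropUntil w2 h2 with hD
    have hsplit2 : D.length = (D.takeUntil w1 hmem').length + (D.dropUntil w1 hmem').length := by
      have := congrArg Walk.length (D.take_spec hmem')
      rw [Walk.length_append] at this
      omega
    have hR2 : 2 ≤ (D.takeUntil w1 hmem').length := by
      rcases Nat.lt_or_ge (D.takeUntil w1 hmem').length 2 with hlt | hge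
      · by_cases hz0 : (D.takeUntil w1 hmem').length = 0
        · exact absurd (Walk.eq_of_length_eq_zero hz0).symm hne
        · have hz1 : (D.takeUntil w1 hmem').length = 1 := by omega
          refine absurd (P.edges_dropUntil_subset h2
            ((D.edges_takeUntil_subset hmem') (edge_of_length_one _ hz1))) ?_
          rw [Sym2.eq_swap]
          exact hE
      · exact hge
    refine ⟨T.append (Walk.cons hadj.symm (D.dropUntil w1 hmem')), ?_, ?_⟩
    · rw [Walk.length_append, Walk.length_cons]
      omega
    · intro w hw
      rw [Walk.mem_support_append_iff] at hw
      rcases hw with hw | hw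
      · exact P.support_takeUntil_subset h2 hw
      · rw [Walk.support_cons, List.mem_cons] at hw
        rcases hw with rfl | hw
        · exact h2
        · exact P.support_dropUntil_subset h2 ((D.support_dropUntil_subset hmem') hw)

lemma cons_concat_support {a b z z' y : V} (P : G.Walk a b) (h1 : G.Adj z a) (h2 : G.Adj b z') :
    y ∈ (Walk.cons h1 (P.concat h2)).support ↔ y = z ∨ y ∈ P.support ∨ y = z' := by
  simp only [Walk.support_cons, List.mem_cons, Walk.support_concat, List.concat_eq_append,
    List.mem_append, List.mem_singleton]
  tauto

lemma cons_concat_edges {a b z z' : V} (P : G.Walk a b) (h1 : G.Adj z a) (h2 : G.Adj b z') (e : Sym2 V) :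
    e ∈ (Walk.cons h1 (P.concat h2)).edges ↔ e = s(z, a) ∨ e ∈ P.edges ∨ e = s(b, z') := by
  simp only [Walk.edges_cons, List.mem_cons, Walk.edges_concat, List.concat_eq_append,
    List.mem_append, List.mem_singleton]
  tauto

lemma cons_concat_length {a b z z' : V} (P : G.Walk a b) (h1 : G.Adj z a) (h2 : G.Adj b z') :
    (Walk.cons h1 (P.concat h2)).length = P.length + 2 := by
  simp [Walk.length_cons, Walk.length_concat]

lemma cycle_of_path {a b z : V} (P : G.Walk a b) (hP : P.IsPath) (hab : a ≠ b)
    (hz : z ∉ P.support) (h1 : G.Adj z a) (h2 : G.Adj b z) :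
    (Walk.cons h1 (P.concat h2)).IsCycle := by
  rw [Walk.isCycle_def]
  have hza : s(z, a) ∉ P.edges := fun hm => hz (P.fst_mem_support_of_mem_edges hm)
  have hbz : s(b, z) ∉ P.edges := fun hm => hz (P.snd_mem_support_of_mem_edges hm)
  have hzb : z ≠ b := fun h => hz (h ▸ P.end_mem_support)
  have hne : s(z, a) ≠ s(b, z) := by
    intro h
    rcases Sym2.eq_iff.mp h with ⟨h1', h2'⟩ | ⟨h1', h2'⟩
    · exact hzb h1'
    · exact hab h2'
  refine ⟨?_, by simp, ?_⟩
  · rw [Walk.isTrail_def, Walk.edges_cons, Walk.edges_concat, List.concat_eq_append]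
    rw [List.nodup_cons, List.mem_append, List.mem_singleton, List.nodup_append]
    refine ⟨?_, hP.edges_nodup, List.nodup_singleton _, ?_⟩
    · rintro (h | h)
      · exact hza h
      · exact hne h
    · intro e he e' he'
      rw [List.mem_singleton] at he'
      intro h; subst he'; exact hbz (h ▸ he)
  · rw [Walk.support_cons, Walk.support_concat]
    rw [List.tail_cons, List.nodup_append]
    refine ⟨hP.support_nodup, List.nodup_singleton _, ?_⟩
    intro w hw w' hw'
    rw [List.mem_singleton] at hw'
    subst hw'; exact fun h => hz (h ▸ hw)





lemma nadj_edges {u : V} (C : G.Walk u u) {y1 y2 : V} (h : ¬ C.toSubgraph.Adj y1 y2) :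
    s(y1, y2) ∉ C.edges := fun hm =>
  h ((Subgraph.mem_edgeSet).mp ((Walk.mem_edges_toSubgraph C).mpr hm))

lemma use_cycle [DecidableEq V] (hch : G.IsChordal) (hc : G.Connected) (x : V) {m : ℕ}
    {a b z : V}
    (P : G.Walk a b) (hP : P.IsPath) (hlen : 2 ≤ P.length) (hab : a ≠ b)
    (hz : G.dist x z + 1 = m) (hzs : z ∉ P.support)
    (h1 : G.Adj z a) (h2 : G.Adj b z)
    (hsupp : ∀ w ∈ P.support, w = a ∨ w = b ∨ m < G.dist x w)
    (rec : ∀ Q : G.Walk a b, Q.length < P.length → (∀ w ∈ Q.support, w ∈ P.support) →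
      G.Adj a b) :
    G.Adj a b := by
  have hcyc : (Walk.cons h1 (P.concat h2)).IsCycle := cycle_of_path P hP hab hzs h1 h2
  have hClen : 4 ≤ (Walk.cons h1 (P.concat h2)).length := by
    rw [cons_concat_length]; omega
  obtain ⟨y1, y2, hy1, hy2, hyadj, hynadj⟩ := hch z _ hcyc hClen
  have hE : s(y1, y2) ∉ (Walk.cons h1 (P.concat h2)).edges := nadj_edges _ hynadj
  rw [cons_concat_support] at hy1 hy2
  -- helper to refute chords incident to z
  have hzchord : ∀ y ∈ P.support, G.Adj z y → s(z, y) ∉ (Walk.cons h1 (P.concat h2)).edges →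
      G.Adj a b := by
    intro y hyP hadj hEzy
    rcases hsupp y hyP with h | h | hgt
    · subst h
      exact absurd ((cons_concat_edges P h1 h2 s(z, y)).mpr (Or.inl rfl)) hEzy
    · subst h
      exact absurd ((cons_concat_edges P h1 h2 s(z, y)).mpr
        (Or.inr (Or.inr Sym2.eq_swap))) hEzy
    · have := adj_dist_le hc x hadj.symm
      omega
  have hy1' : y1 = z ∨ y1 ∈ P.support := by tauto
  have hy2' : y2 = z ∨ y2 ∈ P.support := by tauto
  rcases hy1' with rfl | hy1'
  · rcases hy2' with rfl | hy2'
    · exact absurd rfl hyadj.ne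
    · exact hzchord y2 hy2' hyadj hE
  · rcases hy2' with rfl | hy2'
    · refine hzchord y1 hy1' hyadj.symm ?_
      rw [Sym2.eq_swap]
      exact hE
    · have hEP : s(y1, y2) ∉ P.edges := fun hm =>
        hE ((cons_concat_edges P h1 h2 _).mpr (Or.inr (Or.inl hm)))
      obtain ⟨Q, hQl, hQs⟩ := splice P hy1' hy2' hyadj.ne hyadj hEP
      exact rec Q hQl hQs

set_option maxHeartbeats 1000000 in
lemma key (hch : G.IsChordal) (hc : G.Connected) (x : V) :
    ∀ m : ℕ, ∀ a b : V, G.dist x a = m → G.dist x b = m → a ≠ b →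
      ∀ W : G.Walk a b, (∀ w ∈ W.support, w = a ∨ w = b ∨ m < G.dist x w) → G.Adj a b := by
  classical
  intro m
  induction m using Nat.strongRecOn with
  | ind m IHm =>
  intro a b ha hb hab
  suffices H : ∀ n (W : G.Walk a b), W.length ≤ n →
      (∀ w ∈ W.support, w = a ∨ w = b ∨ m < G.dist x w) → G.Adj a b by
    exact fun W hs => H W.length W le_rfl hs
  intro n
  induction n using Nat.strongRecOn with
  | ind n IHn =>
  intro W hWn hsupp
  have hP : W.bypass.IsPath := W.bypass_isPath
  set P := W.bypass with hPdef
  have hPsub : P.support ⊆ W.support := W.support_bypass_subset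
  have hPsupp : ∀ w ∈ P.support, w = a ∨ w = b ∨ m < G.dist x w :=
    fun w hw => hsupp w (hPsub hw)
  have hPlen : P.length ≤ n := le_trans W.length_bypass_le hWn
  have rec0 : ∀ Q : G.Walk a b, Q.length < P.length →
      (∀ w ∈ Q.support, w ∈ P.support) → G.Adj a b := by
    intro Q hQl hQs
    exact IHn Q.length (by omega) Q le_rfl (fun w hw => hPsupp w (hQs w hw))
  by_cases h0 : P.length = 0
  · exact absurd (Walk.eq_of_length_eq_zero h0) hab
  by_cases h1 : P.length = 1
  · exact P.adj_of_mem_edges (edge_of_length_one P h1)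
  have hP2 : 2 ≤ P.length := by omega
  have hm1 : 1 ≤ m := by
    by_contra hm0
    have hax : x = a := (hc.dist_eq_zero_iff).mp (by omega)
    have hbx : x = b := (hc.dist_eq_zero_iff).mp (by omega)
    exact hab (hax ▸ hbx)
  obtain ⟨pa, hpaa, hpa⟩ := exists_parent hc x (u := a) (by omega)
  obtain ⟨pb, hpbb, hpb⟩ := exists_parent hc x (u := b) (by omega)
  have hpa' : G.dist x pa + 1 = m := by omega
  have hpb' : G.dist x pb + 1 = m := by omega
  have hpanP : pa ∉ P.support := by
    intro hmem
    rcases hPsupp pa hmem with h | h | h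
    · rw [h] at hpa'; omega
    · rw [h] at hpa'; omega
    · omega
  have hpbnP : pb ∉ P.support := by
    intro hmem
    rcases hPsupp pb hmem with h | h | h
    · rw [h] at hpb'; omega
    · rw [h] at hpb'; omega
    · omega
  by_cases hpp : pa = pb
  · subst hpp
    exact use_cycle hch hc x P hP hP2 hab hpa' hpanP hpaa.symm hpbb hPsupp rec0
  · -- prove the parents are adjacent, using the induction on m
    have hadjp : G.Adj pa pb := by
      refine IHm (m - 1) (by omega) pa pb (by omega) (by omega) hpp
        (Walk.cons hpaa.symm (P.concat hpbb)) ?_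
      intro w hw
      rw [cons_concat_support] at hw
      rcases hw with h | h | h
      · exact Or.inl h
      · rcases hPsupp w h with h' | h' | h'
        · right; right; rw [h', ha]; omega
        · right; right; rw [h', hb]; omega
        · right; right; omega
      · exact Or.inr (Or.inl h)
    -- the big cycle through both parents
    have hP'path : (P.concat hpbb).IsPath := by
      apply Walk.IsPath.mk'
      rw [Walk.support_concat, List.nodup_append]
      refine ⟨hP.support_nodup, List.nodup_singleton _, ?_⟩
      intro w hw w' hw'
      rw [List.mem_singleton] at hw'
      subst hw'; exact fun h => hpbnP (h ▸ hw)
    have hapb : a ≠ pb := by intro h; rw [← h] at hpb'; omega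
    have hpaP' : pa ∉ (P.concat hpbb).support := by
      rw [Walk.support_concat, List.mem_append, List.mem_singleton]
      rintro (h | h)
      · exact hpanP h
      · exact hpp h
    have hcyc : (Walk.cons hpaa.symm ((P.concat hpbb).concat hadjp.symm)).IsCycle :=
      cycle_of_path (P.concat hpbb) hP'path hapb hpaP' hpaa.symm hadjp.symm
    have hClen : 4 ≤ (Walk.cons hpaa.symm ((P.concat hpbb).concat hadjp.symm)).length := by
      rw [cons_concat_length, Walk.length_concat]; omega
    obtain ⟨y1, y2, hy1, hy2, hyadj, hynadj⟩ := hch pa _ hcyc hClen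
    have hE : s(y1, y2) ∉ (Walk.cons hpaa.symm ((P.concat hpbb).concat hadjp.symm)).edges :=
      nadj_edges _ hynadj
    rw [cons_concat_support] at hy1 hy2
    -- memberships: y = pa ∨ (y ∈ P.support ∨ y = pb) ∨ y = pa
    have hmem1 : y1 = pa ∨ y1 ∈ P.support ∨ y1 = pb := by
      rcases hy1 with h | h | h
      · exact Or.inl h
      · rw [Walk.support_concat, List.mem_append,
          List.mem_singleton] at h
        exact Or.inr h
      · exact Or.inl h
    have hmem2 : y2 = pa ∨ y2 ∈ P.support ∨ y2 = pb := by
      rcases hy2 with h | h | h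
      · exact Or.inl h
      · rw [Walk.support_concat, List.mem_append,
          List.mem_singleton] at h
        exact Or.inr h
      · exact Or.inl h
    clear hy1 hy2
    -- edge membership helper for this big cycle
    have hCe : ∀ e : Sym2 V,
        e ∈ (Walk.cons hpaa.symm ((P.concat hpbb).concat hadjp.symm)).edges ↔
        e = s(pa, a) ∨ (e ∈ P.edges ∨ e = s(b, pb)) ∨ e = s(pb, pa) := by
      intro e
      rw [cons_concat_edges]
      constructor
      · rintro (h | h | h)
        · exact Or.inl h
        · rw [Walk.edges_concat, List.concat_eq_append, List.mem_append,
            List.mem_singleton] at h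
          exact Or.inr (Or.inl h)
        · exact Or.inr (Or.inr h)
      · rintro (h | (h | h) | h)
        · exact Or.inl h
        · refine Or.inr (Or.inl ?_)
          rw [Walk.edges_concat, List.concat_eq_append, List.mem_append]
          exact Or.inl h
        · refine Or.inr (Or.inl ?_)
          rw [Walk.edges_concat, List.concat_eq_append, List.mem_append, List.mem_singleton]
          exact Or.inr h
        · exact Or.inr (Or.inr h)
    -- the two productive chord cases
    have case3 : G.Adj pa b → G.Adj a b := by
      intro h3
      exact use_cycle hch hc x P hP hP2 hab hpa' hpanP hpaa.symm h3.symm hPsupp rec0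
    have case3' : G.Adj pb a → G.Adj a b := by
      intro h3
      have hrev : ∀ w ∈ P.reverse.support, w = b ∨ w = a ∨ m < G.dist x w := by
        intro w hw
        rw [Walk.support_reverse, List.mem_reverse] at hw
        rcases hPsupp w hw with h | h | h
        · exact Or.inr (Or.inl h)
        · exact Or.inl h
        · exact Or.inr (Or.inr h)
      have hrec : ∀ Q : G.Walk b a, Q.length < P.reverse.length →
          (∀ w ∈ Q.support, w ∈ P.reverse.support) → G.Adj b a := by
        intro Q hQl hQs
        refine (rec0 Q.reverse (by rw [Walk.length_reverse] at hQl ⊢; exact hQl) ?_).symm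
        intro w hw
        rw [Walk.support_reverse, List.mem_reverse] at hw
        have := hQs w hw
        rw [Walk.support_reverse, List.mem_reverse] at this
        exact this
      refine (use_cycle hch hc x P.reverse hP.reverse (by rw [Walk.length_reverse]; omega)
        hab.symm hpb' (by rw [Walk.support_reverse, List.mem_reverse]; exact hpbnP)
        hpbb.symm h3.symm hrev hrec).symm
    -- refute chords from pa / pb to interior vertices
    have hlevpa : ∀ y ∈ P.support, G.Adj pa y → y = a ∨ y = b := by
      intro y hy hadj
      rcases hPsupp y hy with h | h | h
      · exact Or.inl h
      · exact Or.inr h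
      · have := adj_dist_le hc x hadj.symm
        omega
    have hlevpb : ∀ y ∈ P.support, G.Adj pb y → y = a ∨ y = b := by
      intro y hy hadj
      rcases hPsupp y hy with h | h | h
      · exact Or.inl h
      · exact Or.inr h
      · have := adj_dist_le hc x hadj.symm
        omega
    -- now the full case analysis on the chord
    rcases hmem1 with rfl | hP1 | rfl
    · -- y1 = pa
      rcases hmem2 with rfl | hP2' | rfl
      · exact absurd rfl hyadj.ne
      · rcases hlevpa y2 hP2' hyadj with rfl | rfl
        · exact absurd ((hCe s(y1, y2)).mpr (Or.inl rfl)) hE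
        · exact case3 hyadj
      · exact absurd ((hCe s(y1, y2)).mpr (Or.inr (Or.inr Sym2.eq_swap))) hE
    · rcases hmem2 with rfl | hP2' | rfl
      · -- y2 = pa
        rcases hlevpa y1 hP1 hyadj.symm with rfl | rfl
        · exact absurd ((hCe s(y1, y2)).mpr (Or.inl Sym2.eq_swap)) hE
        · exact case3 hyadj.symm
      · -- both on P: splice
        have hEP : s(y1, y2) ∉ P.edges := fun hm =>
          hE ((hCe _).mpr (Or.inr (Or.inl (Or.inl hm))))
        obtain ⟨Q, hQl, hQs⟩ := splice P hP1 hP2' hyadj.ne hyadj hEP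
        exact rec0 Q hQl hQs
      · -- y2 = pb
        rcases hlevpb y1 hP1 hyadj.symm with rfl | rfl
        · exact case3' hyadj.symm
        · exact absurd ((hCe s(y1, y2)).mpr (Or.inr (Or.inl (Or.inr rfl)))) hE
    · -- y1 = pb
      rcases hmem2 with rfl | hP2' | rfl
      · exact absurd ((hCe s(y1, y2)).mpr (Or.inr (Or.inr rfl))) hE
      · rcases hlevpb y2 hP2' hyadj with rfl | rfl
        · exact case3' hyadj
        · exact absurd ((hCe s(y1, y2)).mpr (Or.inr (Or.inl (Or.inr Sym2.eq_swap)))) hE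
      · exact absurd rfl hyadj.ne

lemma mem_iff (hc : G.Connected) (x y w : V) {l mm : ℕ} (hy : G.dist x y = l) (hmm : mm < l) :
    (G.dist x w = mm ∧ G.IsAncestor x w y) ↔
      (G.dist x w = mm ∧ ∃ Wd : G.Walk y w, Wd.length + mm = l) := by
  constructor
  · rintro ⟨h1, -, q, -, hql⟩
    exact ⟨h1, q, by rw [hy, h1] at hql; omega⟩
  · rintro ⟨h1, Wd, hWd⟩
    have hdesc : Wd.length + G.dist x w = G.dist x y := by rw [hy, h1]; omega
    exact ⟨h1, by rw [h1, hy]; omega,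
      Wd, desc_isPath hc x Wd hdesc, by rw [hy, h1]; omega⟩

end ChordalAux

open ChordalAux in
theorem ancestor_cliques_adjacent_of_odd' {V : Type*} (G : SimpleGraph V)
    (hch : G.IsChordal) (hconn : G.Connected) (x u v : V) (ℓ p : ℕ) (hℓ : 1 ≤ ℓ)
    (hu : G.dist u x = ℓ) (hv : G.dist v x = ℓ)
    (hodd : Odd p) (hp : 3 ≤ p) (huv : G.dist u v = p)
    (Ku Kv : Set V)
    (hKu : Ku = {w : V | G.dist x w = ℓ - p / 2 ∧ G.IsAncestor x w u})
    (hKv : Kv = {w : V | G.dist x w = ℓ - p / 2 ∧ G.IsAncestor x w v}) :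
    G.IsClique Ku ∧ G.IsClique Kv ∧ Disjoint Ku Kv ∧ ∃ a ∈ Ku, ∃ b ∈ Kv, G.Adj a b := by
  classical
  obtain ⟨k, hk⟩ := hodd
  have hxu : G.dist x u = ℓ := by rw [SimpleGraph.dist_comm]; exact hu
  have hxv : G.dist x v = ℓ := by rw [SimpleGraph.dist_comm]; exact hv
  have hple : p ≤ 2 * ℓ := by
    have h1 : G.dist u v ≤ G.dist u x + G.dist x v := hconn.dist_triangle
    omega
  have hk1 : 1 ≤ k := by omega
  have hkl : k < ℓ := by omega
  have hm : ℓ - p / 2 = ℓ - k := by omega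
  have hmk : (ℓ - k) + k = ℓ := by omega
  have hmlt : ℓ - k < ℓ := by omega
  -- membership characterizations
  have memKu : ∀ w, w ∈ Ku ↔
      (G.dist x w = ℓ - k ∧ ∃ Wd : G.Walk u w, Wd.length + (ℓ - k) = ℓ) := by
    intro w
    rw [hKu, Set.mem_setOf_eq, hm]
    exact mem_iff hconn x u w hxu hmlt
  have memKv : ∀ w, w ∈ Kv ↔
      (G.dist x w = ℓ - k ∧ ∃ Wd : G.Walk v w, Wd.length + (ℓ - k) = ℓ) := by
    intro w
    rw [hKv, Set.mem_setOf_eq, hm]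
    exact mem_iff hconn x v w hxv hmlt
  -- cliques
  have clique : ∀ (y : V), G.dist x y = ℓ → ∀ K : Set V,
      (∀ w, w ∈ K ↔ (G.dist x w = ℓ - k ∧ ∃ Wd : G.Walk y w, Wd.length + (ℓ - k) = ℓ)) →
      G.IsClique K := by
    intro y hy K hK
    rw [SimpleGraph.isClique_iff]
    intro a' haK b' hbK hne
    obtain ⟨ha1, Wa, hWa⟩ := (hK _).mp haK
    obtain ⟨hb1, Wb, hWb⟩ := (hK _).mp hbK
    have hWa' : Wa.length + G.dist x a' = G.dist x y := by rw [ha1, hy]; omega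
    have hWb' : Wb.length + G.dist x b' = G.dist x y := by rw [hb1, hy]; omega
    apply key hch hconn x (ℓ - k) a' b' ha1 hb1 hne (Wa.reverse.append Wb)
    intro w hw
    rw [Walk.mem_support_append_iff] at hw
    rcases hw with hw | hw
    · rw [Walk.support_reverse, List.mem_reverse] at hw
      rcases (desc_le hconn x Wa hWa' w hw).2 with h | h
      · exact Or.inl h
      · right; right; rw [ha1] at h; exact h
    · rcases (desc_le hconn x Wb hWb' w hw).2 with h | h
      · exact Or.inr (Or.inl h)
      · right; right; rw [hb1] at h; exact h
  have cliqueKu : G.IsClique Ku := clique u hxu Ku memKu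
  have cliqueKv : G.IsClique Kv := clique v hxv Kv memKv
  -- disjointness
  have hdisj : Disjoint Ku Kv := by
    rw [Set.disjoint_left]
    intro w hwu hwv
    obtain ⟨h1, Wa, hWa⟩ := (memKu _).mp hwu
    obtain ⟨h2, Wb, hWb⟩ := (memKv _).mp hwv
    have d1 : G.dist u w ≤ k := by have := G.dist_le Wa; omega
    have d2 : G.dist v w ≤ k := by have := G.dist_le Wb; omega
    have d3 : G.dist w v = G.dist v w := SimpleGraph.dist_comm
    have d4 : G.dist u v ≤ G.dist u w + G.dist w v := hconn.dist_triangle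
    omega
  refine ⟨cliqueKu, cliqueKv, hdisj, ?_⟩
  -- the adjacent pair
  have hne_of_mem : ∀ a' ∈ Ku, ∀ b' ∈ Kv, a' ≠ b' := by
    intro a' ha' b' hb' h
    exact Set.disjoint_left.mp hdisj ha' (h ▸ hb')
  -- half lemma
  have half : ∀ y z : V, G.dist x y = ℓ → G.dist x z = ℓ →
      ∀ Ky Kz : Set V,
      (∀ w, w ∈ Ky ↔ (G.dist x w = ℓ - k ∧ ∃ Wd : G.Walk y w, Wd.length + (ℓ - k) = ℓ)) →
      (∀ w, w ∈ Kz ↔ (G.dist x w = ℓ - k ∧ ∃ Wd : G.Walk z w, Wd.length + (ℓ - k) = ℓ)) →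
      (∀ a' ∈ Ky, ∀ b' ∈ Kz, a' ≠ b') →
      ∀ w0, G.dist x w0 = ℓ - k → G.dist y w0 = k → G.dist w0 z = k + 1 →
      ∃ a' ∈ Ky, ∃ b' ∈ Kz, G.Adj a' b' := by
    intro y z hy hz Ky Kz hKy hKz hnedisj w0 hw0x hw0y hw0z
    obtain ⟨Wy, hWy⟩ := hconn.exists_walk_length_eq_dist y w0
    have hw0mem : w0 ∈ Ky := (hKy _).mpr ⟨hw0x, Wy, by omega⟩
    obtain ⟨Q, hQ⟩ := hconn.exists_walk_length_eq_dist w0 z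
    have hQsupp := shortest_support hconn Q hQ
    by_cases hex : ∃ w1 ∈ Q.support, G.dist w0 w1 = 1 ∧ G.dist x w1 = ℓ - k
    · obtain ⟨w1, hw1Q, hw1d, hw1x⟩ := hex
      have hsum := hQsupp w1 hw1Q
      rw [hw0z] at hsum
      have hw1z : G.dist w1 z = k := by omega
      obtain ⟨Wz, hWz⟩ := hconn.exists_walk_length_eq_dist z w1
      have hzw1 : G.dist z w1 = k := by rw [SimpleGraph.dist_comm]; exact hw1z
      refine ⟨w0, hw0mem, w1, (hKz _).mpr ⟨hw1x, Wz, by omega⟩, ?_⟩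
      exact SimpleGraph.dist_eq_one_iff_adj.mp hw1d
    · push_neg at hex
      obtain ⟨b', Wb, hWbl, hWbd⟩ := exists_desc hconn x k z (by omega)
      have hb'x : G.dist x b' = ℓ - k := by omega
      have hb'mem : b' ∈ Kz := (hKz _).mpr ⟨hb'x, Wb, by omega⟩
      have hne : w0 ≠ b' := hnedisj w0 hw0mem b' hb'mem
      refine ⟨w0, hw0mem, b', hb'mem, ?_⟩
      have hWbdesc : Wb.length + G.dist x b' = G.dist x z := by omega
      apply key hch hconn x (ℓ - k) w0 b' hw0x hb'x hne (Q.append Wb)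
      intro w hw
      rw [Walk.mem_support_append_iff] at hw
      rcases hw with hw | hw
      · have hsum := hQsupp w hw
        rw [hw0z] at hsum
        have htr : G.dist x z ≤ G.dist x w + G.dist w z := hconn.dist_triangle
        by_cases hww : w = w0
        · exact Or.inl hww
        · right; right
          have h1 : 1 ≤ G.dist w0 w := by
            rcases Nat.eq_zero_or_pos (G.dist w0 w) with h | h
            · exact absurd ((hconn.dist_eq_zero_iff).mp h).symm hww
            · exact h
          have hexw := hex w hw
          omega
      · rcases (desc_le hconn x Wb hWbdesc w hw).2 with h | h
        · exact Or.inr (Or.inl h)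
        · right; right; rw [hb'x] at h; exact h
  -- main case analysis
  obtain ⟨Wuv, hWuv⟩ := hconn.exists_walk_length_eq_dist u v
  have hWsupp := shortest_support hconn Wuv hWuv
  by_cases hex : ∃ w0 ∈ Wuv.support, G.dist x w0 = ℓ - k
  · obtain ⟨w0, hw0mem, hw0x⟩ := hex
    have hsum := hWsupp w0 hw0mem
    rw [huv] at hsum
    have ht1 : G.dist x u ≤ G.dist x w0 + G.dist w0 u := hconn.dist_triangle
    have ht2 : G.dist x v ≤ G.dist x w0 + G.dist w0 v := hconn.dist_triangle
    have hc1 : G.dist w0 u = G.dist u w0 := SimpleGraph.dist_comm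
    have hsplit2 : (G.dist u w0 = k ∧ G.dist w0 v = k + 1) ∨
        (G.dist u w0 = k + 1 ∧ G.dist w0 v = k) := by omega
    rcases hsplit2 with ⟨hA, hB⟩ | ⟨hA, hB⟩
    · exact half u v hxu hxv Ku Kv memKu memKv hne_of_mem w0 hw0x hA hB
    · have hvw0 : G.dist v w0 = k := by rw [SimpleGraph.dist_comm]; exact hB
      have hw0u : G.dist w0 u = k + 1 := by omega
      obtain ⟨b', hb', a', ha', hadj⟩ := half v u hxv hxu Kv Ku memKv memKu
        (fun a' ha' b'' hb'' h => (hne_of_mem b'' hb'' a' ha' h.symm)) w0 hw0x hvw0 hw0u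
      exact ⟨a', ha', b', hb', hadj.symm⟩
  · push_neg at hex
    obtain ⟨a', Wa, hWal, hWad⟩ := exists_desc hconn x k u (by omega)
    obtain ⟨b', Wb, hWbl, hWbd⟩ := exists_desc hconn x k v (by omega)
    have ha'x : G.dist x a' = ℓ - k := by omega
    have hb'x : G.dist x b' = ℓ - k := by omega
    have ha'mem : a' ∈ Ku := (memKu _).mpr ⟨ha'x, Wa, by omega⟩
    have hb'mem : b' ∈ Kv := (memKv _).mpr ⟨hb'x, Wb, by omega⟩
    refine ⟨a', ha'mem, b', hb'mem, ?_⟩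
    have hne : a' ≠ b' := hne_of_mem a' ha'mem b' hb'mem
    have hWadesc : Wa.length + G.dist x a' = G.dist x u := by omega
    have hWbdesc : Wb.length + G.dist x b' = G.dist x v := by omega
    apply key hch hconn x (ℓ - k) a' b' ha'x hb'x hne (Wa.reverse.append (Wuv.append Wb))
    intro w hw
    rw [Walk.mem_support_append_iff] at hw
    rcases hw with hw | hw
    · rw [Walk.support_reverse, List.mem_reverse] at hw
      rcases (desc_le hconn x Wa hWadesc w hw).2 with h | h
      · exact Or.inl h
      · right; right; rw [ha'x] at h; exact h
    · rw [Walk.mem_support_append_iff] at hw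
      rcases hw with hw | hw
      · right; right
        have hsum := hWsupp w hw
        rw [huv] at hsum
        have ht1 : G.dist x u ≤ G.dist x w + G.dist w u := hconn.dist_triangle
        have ht2 : G.dist x v ≤ G.dist x w + G.dist w v := hconn.dist_triangle
        have hc1 : G.dist w u = G.dist u w := SimpleGraph.dist_comm
        have hxw := hex w hw
        omega
      · rcases (desc_le hconn x Wb hWbdesc w hw).2 with h | h
        · exact Or.inr (Or.inl h)
        · right; right; rw [hb'x] at h; exact h



/-- In a finite connected chordal graph `G`, let `u, v` lie on level `ℓ ≥ 1`
with respect to `x` with `d_G(u,v) = p` for an odd `p ≥ 3`, and let `K_u, K_v` be the sets of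
ancestors of `u, v` on level `ℓ - ⌊p/2⌋`. Then `K_u` and `K_v` are adjacent cliques: they are
cliques of `G`, they are disjoint, and some vertex of `K_u` is adjacent to some vertex of
`K_v`. -/
theorem ancestor_cliques_adjacent_of_odd {V : Type*} [Fintype V] (G : SimpleGraph V)
    (hch : G.IsChordal) (hconn : G.Connected) (x u v : V) (ℓ p : ℕ) (hℓ : 1 ≤ ℓ)
    (hu : G.dist u x = ℓ) (hv : G.dist v x = ℓ)
    (hodd : Odd p) (hp : 3 ≤ p) (huv : G.dist u v = p)
    (Ku Kv : Set V)
    (hKu : Ku = {w : V | G.dist x w = ℓ - p / 2 ∧ G.IsAncestor x w u})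
    (hKv : Kv = {w : V | G.dist x w = ℓ - p / 2 ∧ G.IsAncestor x w v}) :
    G.IsClique Ku ∧ G.IsClique Kv ∧ Disjoint Ku Kv ∧ ∃ a ∈ Ku, ∃ b ∈ Kv, G.Adj a b := by
  exact ancestor_cliques_adjacent_of_odd' G hch hconn x u v ℓ p hℓ hu hv hodd hp huv Ku Kv hKu hKv
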